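/- Let G be a graph, x₀ a vertex, and S, T two sets of vertices. Let Γ_S (resp. Γ_T) be the set of all paths in G from x₀ to S (resp. to T), and let I = { u : u lies on γ ∩ γ' for every γ ∈ Γ_T and every γ' ∈ Γ_S }. For u, u' ∈ I and a path γ ∈ Γ_S ∪ Γ_T containing both, write u ≤_γ u' if u occurs no later than u' along γ (starting from x₀). Then the relation is independent of the path: if u ≤_γ u' for some γ ∈ Γ_S ∪ Γ_T, then u ≤_{γ'} u' for every γ' ∈ Γ_S ∪ Γ_T containing both u and u'. Consequently ≤_I is a well-defined total order on I. -/

import Mathlib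

open SimpleGraph

/-- Any walk's support ends with its endpoint. -/
lemma walk_support_concat {V : Type*} {G : SimpleGraph V} {a b : V} (w : G.Walk a b) :
    ∃ l : List V, w.support = l ++ [b] := by
  refine ⟨w.support.reverse.tail.reverse, ?_⟩
  have h : w.reverse.support = b :: w.reverse.support.tail := w.reverse.support_eq_cons
  rw [Walk.support_reverse] at h
  conv_lhs => rw [← w.support.reverse_reverse, h]
  simp

lemma splice_lemma {V : Type*} [DecidableEq V] {G : SimpleGraph V} {x₀ v v' u u' : V}
    (γ : G.Walk x₀ v) (γ' : G.Walk x₀ v') (hp : γ.IsPath) (hp' : γ'.IsPath)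
    (hu : u ∈ γ.support) (hu2 : u ∈ γ'.support) (hu'2 : u' ∈ γ'.support)
    (hne : u ≠ u')
    (hle : γ.support.idxOf u ≤ γ.support.idxOf u')
    (hlt : γ'.support.idxOf u' < γ'.support.idxOf u) :
    ∃ p : G.Walk x₀ v', p.IsPath ∧ u' ∉ p.support := by
  -- decompose γ
  obtain ⟨lA, hA⟩ := walk_support_concat (γ.takeUntil u hu)
  have hspec : γ.support
      = (γ.takeUntil u hu).support ++ ((γ.dropUntil u hu).support).tail := by
    conv_lhs => rw [← γ.take_spec hu]
    exact Walk.support_append _ _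
  have hnodA : ((γ.takeUntil u hu).support).Nodup := (hp.takeUntil hu).support_nodup
  have hunotlA : u ∉ lA := by
    intro hmem
    rw [hA] at hnodA
    exact (List.disjoint_of_nodup_append hnodA) hmem (by simp)
  -- Claim A : u' ∉ (γ.takeUntil u hu).support
  have claimA : u' ∉ (γ.takeUntil u hu).support := by
    intro hu'A
    have h1 : γ.support.idxOf u' = (γ.takeUntil u hu).support.idxOf u' := by
      rw [hspec]; exact List.idxOf_append_of_mem hu'A
    have h2 : γ.support.idxOf u = (γ.takeUntil u hu).support.idxOf u := by
      rw [hspec]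
      exact List.idxOf_append_of_mem ((γ.takeUntil u hu).end_mem_support)
    have hu'lA : u' ∈ lA := by
      rw [hA] at hu'A
      rcases List.mem_append.1 hu'A with h | h
      · exact h
      · simp at h; exact absurd h.symm hne
    have e1 : (γ.takeUntil u hu).support.idxOf u' = lA.idxOf u' := by
      rw [hA]; exact List.idxOf_append_of_mem hu'lA
    have e2 : (γ.takeUntil u hu).support.idxOf u = lA.length := by
      rw [hA, List.idxOf_append_of_notMem hunotlA]; simp
    have : γ.support.idxOf u' < γ.support.idxOf u := by
      rw [h1, h2, e1, e2]
      exact List.idxOf_lt_length_iff.2 hu'lA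
    omega
  -- decompose γ'
  obtain ⟨lA', hA'⟩ := walk_support_concat (γ'.takeUntil u hu2)
  have hspec' : γ'.support
      = (γ'.takeUntil u hu2).support ++ ((γ'.dropUntil u hu2).support).tail := by
    conv_lhs => rw [← γ'.take_spec hu2]
    exact Walk.support_append _ _
  have hnodA' : ((γ'.takeUntil u hu2).support).Nodup := (hp'.takeUntil hu2).support_nodup
  have hunotlA' : u ∉ lA' := by
    intro hmem
    rw [hA'] at hnodA'
    exact (List.disjoint_of_nodup_append hnodA') hmem (by simp)
  have e2' : (γ'.takeUntil u hu2).support.idxOf u = lA'.length := by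
    rw [hA', List.idxOf_append_of_notMem hunotlA']; simp
  have h2' : γ'.support.idxOf u = lA'.length := by
    rw [hspec', List.idxOf_append_of_mem ((γ'.takeUntil u hu2).end_mem_support), e2']
  -- u' lies in the takeUntil part of γ'
  have hu'A' : u' ∈ (γ'.takeUntil u hu2).support := by
    by_contra hcon
    have : γ'.support.idxOf u'
        = (γ'.takeUntil u hu2).support.length + ((γ'.dropUntil u hu2).support.tail).idxOf u' := by
      rw [hspec']; exact List.idxOf_append_of_notMem hcon
    rw [hA'] at this
    simp [List.length_append] at this
    omega
  -- Claim B : u' ∉ (γ'.dropUntil u hu2).support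
  have claimB : u' ∉ (γ'.dropUntil u hu2).support := by
    intro hu'B
    have hnd : γ'.support.Nodup := hp'.support_nodup
    rw [hspec'] at hnd
    have hdisj := List.disjoint_of_nodup_append hnd
    have : u' ∈ ((γ'.dropUntil u hu2).support).tail := by
      have := (γ'.dropUntil u hu2).support_eq_cons
      rw [this] at hu'B
      rcases List.mem_cons.1 hu'B with h | h
      · exact absurd h.symm hne
      · exact h
    exact hdisj hu'A' this
  -- splice
  set w : G.Walk x₀ v' := (γ.takeUntil u hu).append (γ'.dropUntil u hu2) with hw
  have hwsupp : u' ∉ w.support := by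
    rw [hw, Walk.support_append]
    intro hmem
    rcases List.mem_append.1 hmem with h | h
    · exact claimA h
    · exact claimB (List.mem_of_mem_tail h)
  exact ⟨w.bypass, w.bypass_isPath, fun h => hwsupp (w.support_bypass_subset h)⟩

theorem stmt5 {V : Type*} [DecidableEq V] (G : SimpleGraph V) (x₀ : V) (S T : Set V)
    (I : Set V)
    (hI : I = {u : V |
      (∀ v ∈ S, ∀ w : G.Walk x₀ v, w.IsPath → u ∈ w.support) ∧
      (∀ v ∈ T, ∀ w : G.Walk x₀ v, w.IsPath → u ∈ w.support)}) :
    -- independence of the path: if `u` comes no later than `u'` on some path of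
    -- `Γ_S ∪ Γ_T`, then the same holds on every path of `Γ_S ∪ Γ_T`
    (∀ u ∈ I, ∀ u' ∈ I, ∀ v ∈ S ∪ T, ∀ v' ∈ S ∪ T,
      ∀ (γ : G.Walk x₀ v) (γ' : G.Walk x₀ v'), γ.IsPath → γ'.IsPath →
        γ.support.idxOf u ≤ γ.support.idxOf u' →
        γ'.support.idxOf u ≤ γ'.support.idxOf u') ∧
    -- totality of the resulting relation `≤_I` on `I`
    (∀ u ∈ I, ∀ u' ∈ I,
      (∀ v ∈ S ∪ T, ∀ γ : G.Walk x₀ v, γ.IsPath →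
        γ.support.idxOf u ≤ γ.support.idxOf u') ∨
      (∀ v ∈ S ∪ T, ∀ γ : G.Walk x₀ v, γ.IsPath →
        γ.support.idxOf u' ≤ γ.support.idxOf u)) := by
  subst hI
  -- membership of mandatory vertices in every relevant path
  have hmem : ∀ u ∈ {u : V |
      (∀ v ∈ S, ∀ w : G.Walk x₀ v, w.IsPath → u ∈ w.support) ∧
      (∀ v ∈ T, ∀ w : G.Walk x₀ v, w.IsPath → u ∈ w.support)},
      ∀ v ∈ S ∪ T, ∀ γ : G.Walk x₀ v, γ.IsPath → u ∈ γ.support := by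
    rintro u ⟨h1, h2⟩ v hv γ hγ
    rcases hv with hv | hv
    · exact h1 v hv γ hγ
    · exact h2 v hv γ hγ
  have main : ∀ u ∈ {u : V |
      (∀ v ∈ S, ∀ w : G.Walk x₀ v, w.IsPath → u ∈ w.support) ∧
      (∀ v ∈ T, ∀ w : G.Walk x₀ v, w.IsPath → u ∈ w.support)}, ∀ u' ∈ {u : V |
      (∀ v ∈ S, ∀ w : G.Walk x₀ v, w.IsPath → u ∈ w.support) ∧
      (∀ v ∈ T, ∀ w : G.Walk x₀ v, w.IsPath → u ∈ w.support)},
      ∀ v ∈ S ∪ T, ∀ v' ∈ S ∪ T,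
      ∀ (γ : G.Walk x₀ v) (γ' : G.Walk x₀ v'), γ.IsPath → γ'.IsPath →
        γ.support.idxOf u ≤ γ.support.idxOf u' →
        γ'.support.idxOf u ≤ γ'.support.idxOf u' := by
    intro u hu u' hu' v hv v' hv' γ γ' hγ hγ' hle
    by_contra hcon
    push_neg at hcon
    rcases eq_or_ne u u' with rfl | hne
    · omega
    obtain ⟨p, hpath, hnot⟩ := splice_lemma γ γ' hγ hγ'
      (hmem u hu v hv γ hγ) (hmem u hu v' hv' γ' hγ')
      (hmem u' hu' v' hv' γ' hγ') hne hle hcon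
    exact hnot (hmem u' hu' v' hv' p hpath)
  refine ⟨main, ?_⟩
  intro u hu u' hu'
  by_cases h : ∃ v ∈ S ∪ T, ∃ γ : G.Walk x₀ v, γ.IsPath ∧
      γ.support.idxOf u ≤ γ.support.idxOf u'
  · obtain ⟨v, hv, γ, hγ, hle⟩ := h
    exact Or.inl fun v' hv' γ' hγ' => main u hu u' hu' v hv v' hv' γ γ' hγ hγ' hle
  · push_neg at h
    exact Or.inr fun v hv γ hγ => le_of_lt (h v hv γ hγ)
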